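/- Let T = (Z_p)^d identified with the additive group of the field F_{p^d}, let H = {(h,h) : h ∈ F_{p^d}^*} acting on T × T by componentwise field multiplication, and let G = (T × T)⋊H. For λ ∈ F_{p^d} set T_λ = {(u, λu) : u ∈ T} and T_∞ = 1 × T. For a subset Λ ⊆ F_{p^d} ∪ {∞} containing 0 and ∞, form the pregeometry Γ_Λ with type set Λ, elements of type λ being the right cosets of T_λ·H in G with G acting by right multiplication, and any two elements of distinct types incident. Then Γ_Λ is isomorphic to the complete multipartite pregeometry Γ(|Λ|, p^d), the kernel of the G-action on the type-λ part is exactly T_λ, and Γ_Λ is G-normal-basic. -/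

import Mathlib

/-- Conversion of additive automorphisms to multiplicative automorphisms of the
corresponding multiplicative group. -/
def addAutToMulAut (A : Type*) [AddGroup A] : Multiplicative (AddAut A) →* MulAut (Multiplicative A) where
  toFun e := AddEquiv.toMultiplicative e.toAdd
  map_one' := rfl
  map_mul' _ _ := rfl

/-- The action of the multiplicative group `Fˣ` of the field `F = F_{p^d}` on
`T × T = F × F` by simultaneous field multiplication, as a homomorphism into
the automorphism group. -/
noncomputable def scalarHom (p d : ℕ) [Fact p.Prime] :
    (GaloisField p d)ˣ →* MulAut (Multiplicative (GaloisField p d × GaloisField p d)) :=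
  (addAutToMulAut _).comp
    (DistribMulAction.toAddAut (GaloisField p d)ˣ (GaloisField p d × GaloisField p d))

/-- The group `G = (T × T) ⋊ H` with `T = (Z_p)^d` the additive group of
`F_{p^d}` and `H = {(h,h) : h ∈ F_{p^d}ˣ}` acting diagonally. -/
abbrev Gp (p d : ℕ) [Fact p.Prime] :=
  Multiplicative (GaloisField p d × GaloisField p d) ⋊[scalarHom p d] (GaloisField p d)ˣ

/-- The subgroups `T_λ = {(u, λu) : u ∈ T}` for `λ ∈ F_{p^d}` and
`T_∞ = 1 × T` (for `λ = none`), viewed inside `G`. -/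
noncomputable def Tpart (p d : ℕ) [Fact p.Prime] : Option (GaloisField p d) → Subgroup (Gp p d)
  | none => (AddSubgroup.toSubgroup
      (AddMonoidHom.inr (GaloisField p d) (GaloisField p d)).range).map SemidirectProduct.inl
  | some c => (AddSubgroup.toSubgroup
      ((AddMonoidHom.id (GaloisField p d)).prod (AddMonoidHom.mulLeft c)).range).map
        SemidirectProduct.inl

/-- The subgroup `H` of `G`. -/
noncomputable def Hpart (p d : ℕ) [Fact p.Prime] : Subgroup (Gp p d) :=
  (SemidirectProduct.inr : (GaloisField p d)ˣ →* Gp p d).range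


namespace GFAux

variable (p d : ℕ) [Fact p.Prime]

/-- The invariant of the coset of `T_l ⬝ H`. -/
noncomputable def fval (l : Option (GaloisField p d)) (g : Gp p d) : GaloisField p d :=
  match l with
  | none => (Multiplicative.toAdd g.left).1
  | some c => (Multiplicative.toAdd g.left).2 - c * (Multiplicative.toAdd g.left).1

lemma toAdd_scalar (h : (GaloisField p d)ˣ) (x : Multiplicative (GaloisField p d × GaloisField p d)) :
    Multiplicative.toAdd ((scalarHom p d h) x) =
      ((h : GaloisField p d) * (Multiplicative.toAdd x).1,
       (h : GaloisField p d) * (Multiplicative.toAdd x).2) := rfl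

lemma fval_mul (l : Option (GaloisField p d)) (g g' : Gp p d) :
    fval p d l (g * g') = fval p d l g + (g.right : GaloisField p d) * fval p d l g' := by
  cases l <;>
    simp only [fval, SemidirectProduct.mul_left, toAdd_mul, toAdd_scalar, Prod.fst_add,
      Prod.snd_add] <;> ring

lemma fval_inl (l : Option (GaloisField p d)) (x : GaloisField p d × GaloisField p d) :
    fval p d l (SemidirectProduct.inl (Multiplicative.ofAdd x)) =
      match l with
      | none => x.1
      | some c => x.2 - c * x.1 := by
  cases l <;> rfl

lemma fval_inr (l : Option (GaloisField p d)) (h : (GaloisField p d)ˣ) :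
    fval p d l (SemidirectProduct.inr h) = 0 := by
  cases l <;> simp [fval, SemidirectProduct.left_inr]

lemma fval_one (l : Option (GaloisField p d)) : fval p d l 1 = 0 := by
  cases l with
  | none => rfl
  | some c =>
    show (0 : GaloisField p d) - c * 0 = 0
    rw [mul_zero, sub_zero]

/-- `{g | fval l g = 0}` as a subgroup; it equals `T_l ⊔ H`. -/
noncomputable def Kfull (l : Option (GaloisField p d)) : Subgroup (Gp p d) where
  carrier := {g | fval p d l g = 0}
  one_mem' := fval_one p d l
  mul_mem' := by
    intro a b ha hb
    simp only [Set.mem_setOf_eq] at *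
    rw [fval_mul, ha, hb, mul_zero, add_zero]
  inv_mem' := by
    intro a ha
    simp only [Set.mem_setOf_eq] at *
    have h := fval_mul p d l a a⁻¹
    rw [mul_inv_cancel, fval_one, ha, zero_add] at h
    exact (Units.mul_right_eq_zero a.right).mp h.symm

lemma mem_Kfull (l : Option (GaloisField p d)) (g : Gp p d) :
    g ∈ Kfull p d l ↔ fval p d l g = 0 := Iff.rfl

lemma mem_Tpart (l : Option (GaloisField p d)) (g : Gp p d) :
    g ∈ Tpart p d l ↔ fval p d l g = 0 ∧ g.right = 1 := by
  cases l with
  | none =>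
    constructor
    · rintro ⟨x, ⟨u, rfl⟩, rfl⟩
      exact ⟨rfl, rfl⟩
    · rintro ⟨h1, h2⟩
      have hg : g = SemidirectProduct.inl g.left := by
        ext : 1
        · rfl
        · rw [h2]; rfl
      refine ⟨g.left, ⟨(Multiplicative.toAdd g.left).2, ?_⟩, hg.symm⟩
      show ((0 : GaloisField p d), (Multiplicative.toAdd g.left).2) = Multiplicative.toAdd g.left
      rw [Prod.ext_iff]
      exact ⟨h1.symm, rfl⟩
  | some c =>
    constructor
    · rintro ⟨x, ⟨u, rfl⟩, rfl⟩
      refine ⟨?_, rfl⟩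
      show c * u - c * u = 0
      ring
    · rintro ⟨h1, h2⟩
      have hg : g = SemidirectProduct.inl g.left := by
        ext : 1
        · rfl
        · rw [h2]; rfl
      refine ⟨g.left, ⟨(Multiplicative.toAdd g.left).1, ?_⟩, hg.symm⟩
      show ((Multiplicative.toAdd g.left).1, c * (Multiplicative.toAdd g.left).1)
        = Multiplicative.toAdd g.left
      rw [Prod.ext_iff]
      refine ⟨rfl, ?_⟩
      have := sub_eq_zero.mp h1
      exact this.symm

lemma sup_eq_Kfull (l : Option (GaloisField p d)) :
    Tpart p d l ⊔ Hpart p d = Kfull p d l := by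
  apply le_antisymm
  · apply sup_le
    · intro g hg
      exact ((mem_Tpart p d l g).1 hg).1
    · rintro g ⟨h, rfl⟩
      exact fval_inr p d l h
  · intro g hg
    rw [mem_Kfull] at hg
    rw [← SemidirectProduct.inl_left_mul_inr_right g]
    refine mul_mem (Subgroup.mem_sup_left ?_) (Subgroup.mem_sup_right ⟨g.right, rfl⟩)
    rw [mem_Tpart]
    constructor
    · cases l <;> simpa [fval] using hg
    · rfl

lemma mem_sup (l : Option (GaloisField p d)) (g : Gp p d) :
    g ∈ Tpart p d l ⊔ Hpart p d ↔ fval p d l g = 0 := by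
  rw [sup_eq_Kfull, mem_Kfull]

noncomputable def sec (l : Option (GaloisField p d)) (v : GaloisField p d) : Gp p d :=
  match l with
  | none => SemidirectProduct.inl (Multiplicative.ofAdd (v, 0))
  | some _ => SemidirectProduct.inl (Multiplicative.ofAdd ((0 : GaloisField p d), v))

lemma fval_sec (l : Option (GaloisField p d)) (v : GaloisField p d) :
    fval p d l (sec p d l v) = v := by
  cases l <;> simp [sec, fval]

lemma right_sec (l : Option (GaloisField p d)) (v : GaloisField p d) :
    (sec p d l v).right = 1 := by
  cases l <;> rfl

lemma fval_inv (l : Option (GaloisField p d)) (x : Gp p d) :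
    fval p d l x⁻¹ = -(((x.right : GaloisField p d))⁻¹) * fval p d l x := by
  have h := fval_mul p d l x x⁻¹
  rw [mul_inv_cancel, fval_one] at h
  have hr : ((x.right : GaloisField p d)) ≠ 0 := x.right.ne_zero
  have h2 : fval p d l x⁻¹ = -fval p d l x / (x.right : GaloisField p d) := by
    rw [eq_div_iff hr]
    linear_combination -h
  rw [h2]
  ring

lemma quot_eq (l : Option (GaloisField p d)) (x y : Gp p d) :
    (x : Gp p d ⧸ (Tpart p d l ⊔ Hpart p d)) = y ↔ fval p d l x = fval p d l y := by
  rw [QuotientGroup.eq, mem_sup, fval_mul, fval_inv]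
  have hr : ((x.right : GaloisField p d)) ≠ 0 := x.right.ne_zero
  have hinvr : (((x⁻¹).right : GaloisField p d)) = ((x.right : GaloisField p d))⁻¹ := by
    rw [SemidirectProduct.inv_right, Units.val_inv_eq_inv_val]
  rw [hinvr]
  constructor
  · intro h
    have h2 : ((x.right : GaloisField p d))⁻¹ * (fval p d l y - fval p d l x) = 0 := by
      linear_combination h
    rcases mul_eq_zero.mp h2 with h3 | h3
    · exact absurd h3 (inv_ne_zero hr)
    · exact (sub_eq_zero.mp h3).symm
  · intro h
    rw [h]; ring

lemma quot_card (hd : d ≠ 0) (l : Option (GaloisField p d)) :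
    Nat.card (Gp p d ⧸ (Tpart p d l ⊔ Hpart p d)) = p ^ d := by
  have hb : Function.Bijective
      (fun v : GaloisField p d =>
        ((sec p d l v : Gp p d) : Gp p d ⧸ (Tpart p d l ⊔ Hpart p d))) := by
    constructor
    · intro v w h
      have := (quot_eq p d l _ _).1 h
      rwa [fval_sec, fval_sec] at this
    · intro x
      induction x using QuotientGroup.induction_on with
      | H g =>
        exact ⟨fval p d l g, (quot_eq p d l _ _).2 (fval_sec p d l _)⟩
  rw [← Nat.card_congr (Equiv.ofBijective _ hb), GaloisField.card p d hd]

lemma smul_mk (g a : Gp p d) (l : Option (GaloisField p d)) :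
    g • ((a : Gp p d ⧸ (Tpart p d l ⊔ Hpart p d))) =
      ((g * a : Gp p d) : Gp p d ⧸ (Tpart p d l ⊔ Hpart p d)) := rfl

lemma transitive_of (N : Subgroup (Gp p d)) (l : Option (GaloisField p d))
    (H : ∀ v : GaloisField p d, ∃ n ∈ N, n.right = 1 ∧ fval p d l n = v) :
    ∀ x y : Gp p d ⧸ (Tpart p d l ⊔ Hpart p d), ∃ n ∈ N, n • x = y := by
  intro x y
  induction x using QuotientGroup.induction_on with
  | H a =>
    induction y using QuotientGroup.induction_on with
    | H b =>
      obtain ⟨n, hn, hr, hf⟩ := H (fval p d l b - fval p d l a)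
      refine ⟨n, hn, ?_⟩
      rw [smul_mk, quot_eq, fval_mul, hf, hr]
      push_cast
      ring

lemma kernel_iff (l : Option (GaloisField p d)) (g : Gp p d) :
    (∀ x : Gp p d ⧸ (Tpart p d l ⊔ Hpart p d), g • x = x) ↔ g ∈ Tpart p d l := by
  rw [mem_Tpart]
  constructor
  · intro h
    have h0 := h ((sec p d l 0 : Gp p d) : Gp p d ⧸ (Tpart p d l ⊔ Hpart p d))
    rw [smul_mk, quot_eq, fval_mul, fval_sec, mul_zero, add_zero] at h0
    have h1 := h ((sec p d l 1 : Gp p d) : Gp p d ⧸ (Tpart p d l ⊔ Hpart p d))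
    rw [smul_mk, quot_eq, fval_mul, fval_sec, h0, zero_add, mul_one] at h1
    exact ⟨h0, Units.val_eq_one.mp h1⟩
  · rintro ⟨hf, hr⟩ x
    induction x using QuotientGroup.induction_on with
    | H a => rw [smul_mk, quot_eq, fval_mul, hf, hr, zero_add, Units.val_one, one_mul]

lemma exists_translation (N : Subgroup (Gp p d)) (hN : N.Normal) (n₀ : Gp p d)
    (hn : n₀ ∈ N) (hr : n₀.right ≠ 1) (l : Option (GaloisField p d)) :
    ∀ v : GaloisField p d, ∃ n ∈ N, n.right = 1 ∧ fval p d l n = v := by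
  intro v
  set h : GaloisField p d := (n₀.right : GaloisField p d) with hh_def
  have hh : h ≠ 1 := fun e => hr (Units.val_eq_one.mp e)
  have h1 : (1 : GaloisField p d) - h ≠ 0 := sub_ne_zero.mpr (Ne.symm hh)
  set σ := sec p d l (v / (1 - h)) with hσ_def
  have hσr : σ.right = 1 := right_sec p d l _
  have hσf : fval p d l σ = v / (1 - h) := fval_sec p d l _
  refine ⟨σ * n₀ * σ⁻¹ * n₀⁻¹, mul_mem (hN.conj_mem n₀ hn σ) (inv_mem hn), ?_, ?_⟩
  · simp [SemidirectProduct.mul_right, SemidirectProduct.inv_right, hσr]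
  · have hne : ((n₀.right : GaloisField p d)) ≠ 0 := n₀.right.ne_zero
    rw [fval_mul, fval_mul, fval_mul, fval_inv p d l n₀, fval_inv p d l σ]
    simp only [SemidirectProduct.mul_right, SemidirectProduct.inv_right, hσr, hσf, inv_one,
      mul_one, one_mul, Units.val_one, Units.val_mul]
    field_simp
    ring

lemma fval_conj_inr (l : Option (GaloisField p d)) (k : (GaloisField p d)ˣ) (x : Gp p d) :
    fval p d l (SemidirectProduct.inr k * x * (SemidirectProduct.inr k)⁻¹) =
      (k : GaloisField p d) * fval p d l x := by
  rw [fval_mul, fval_mul, fval_inv, fval_inr]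
  simp only [SemidirectProduct.right_inr]
  ring

lemma exists_translation' (N : Subgroup (Gp p d)) (hN : N.Normal) (n₀ : Gp p d)
    (hn : n₀ ∈ N) (hr : n₀.right = 1) (l : Option (GaloisField p d))
    (hu : fval p d l n₀ ≠ 0) :
    ∀ v : GaloisField p d, ∃ n ∈ N, n.right = 1 ∧ fval p d l n = v := by
  intro v
  by_cases hv : v = 0
  · exact ⟨1, one_mem N, rfl, by rw [hv, fval_one]⟩
  · set k : (GaloisField p d)ˣ := Units.mk0 (v / fval p d l n₀) (div_ne_zero hv hu) with hk
    refine ⟨SemidirectProduct.inr k * n₀ * (SemidirectProduct.inr k)⁻¹,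
      hN.conj_mem _ hn _, ?_, ?_⟩
    · simp [SemidirectProduct.mul_right, SemidirectProduct.inv_right,
        SemidirectProduct.right_inr, hr]
    · rw [fval_conj_inr, hk]
      show v / fval p d l n₀ * fval p d l n₀ = v
      exact div_mul_cancel₀ v hu

lemma eq_one_of (n₀ : Gp p d) (hr : n₀.right = 1) {l m : Option (GaloisField p d)}
    (hl : fval p d l n₀ = 0) (hm : fval p d m n₀ = 0) (hlm : l ≠ m) : n₀ = 1 := by
  have key : (Multiplicative.toAdd n₀.left).1 = 0 ∧ (Multiplicative.toAdd n₀.left).2 = 0 := by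
    match l, m with
    | none, none => exact absurd rfl hlm
    | none, some c =>
      simp only [fval] at hl hm
      rw [hl, mul_zero, sub_zero] at hm
      exact ⟨hl, hm⟩
    | some c, none =>
      simp only [fval] at hl hm
      rw [hm, mul_zero, sub_zero] at hl
      exact ⟨hm, hl⟩
    | some c, some c' =>
      have hcc : c ≠ c' := fun e => hlm (by rw [e])
      simp only [fval] at hl hm
      have ha : (Multiplicative.toAdd n₀.left).1 = 0 := by
        have h2 : (c - c') * (Multiplicative.toAdd n₀.left).1 = 0 := by
          linear_combination hm - hl
        rcases mul_eq_zero.mp h2 with h3 | h3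
        · exact absurd (sub_eq_zero.mp h3) hcc
        · exact h3
      rw [ha, mul_zero, sub_zero] at hl
      exact ⟨ha, hl⟩
  ext : 1
  · show Multiplicative.toAdd n₀.left = Multiplicative.toAdd (1 : Gp p d).left
    have h4 : Multiplicative.toAdd n₀.left = ((0 : GaloisField p d), (0 : GaloisField p d)) :=
      Prod.ext_iff.mpr ⟨key.1, key.2⟩
    rw [h4]; rfl
  · rw [hr]; rfl

end GFAux

/-- Example 5.7: With `G = (T×T) ⋊ H` as above and
`Λ ⊆ F_{p^d} ∪ {∞}` containing `0` and `∞`, the pregeometry `Γ_Λ` whose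
elements of type `λ ∈ Λ` are the cosets of `T_λ·H` in `G` (with `G` acting by
multiplication and any two elements of distinct types incident) satisfies:
every part has size `p^d` (so `Γ_Λ ≅ Γ(|Λ|, p^d)`, the incidence graph being
complete multipartite by construction), the kernel of the `G`-action on the
type-`λ` part is exactly `T_λ`, and `Γ_Λ` is `G`-normal-basic. -/
theorem galois_field_pregeometry (p d : ℕ) [Fact p.Prime] (hd : 0 < d)
    (Λ : Set (Option (GaloisField p d)))
    (h0 : some 0 ∈ Λ) (hinf : none ∈ Λ) :
    -- each part is a coset space of size p^d, so Γ_Λ ≅ Γ(|Λ|, p^d)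
    (∀ l ∈ Λ, Nat.card (Gp p d ⧸ (Tpart p d l ⊔ Hpart p d)) = p ^ d) ∧
    -- at least two parts, each of size > 1 (non-degeneracy)
    (1 < p ^ d ∧ some (0 : GaloisField p d) ≠ (none : Option (GaloisField p d))) ∧
    -- the kernel of the G-action on the part of type l is exactly T_l
    (∀ l ∈ Λ, ∀ g : Gp p d,
      (∀ x : Gp p d ⧸ (Tpart p d l ⊔ Hpart p d), g • x = x) ↔ g ∈ Tpart p d l) ∧
    -- Γ_Λ is G-normal-basic: every nontrivial normal subgroup of G is
    -- transitive on all but at most one part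
    (∀ N : Subgroup (Gp p d), N.Normal → N ≠ ⊥ → ∀ l ∈ Λ, ∀ m ∈ Λ, l ≠ m →
      (∀ x y : Gp p d ⧸ (Tpart p d l ⊔ Hpart p d), ∃ n ∈ N, n • x = y) ∨
      (∀ x y : Gp p d ⧸ (Tpart p d m ⊔ Hpart p d), ∃ n ∈ N, n • x = y)) := by
  classical
  refine ⟨?_, ⟨?_, by simp⟩, ?_, ?_⟩
  · intro l _
    exact GFAux.quot_card p d hd.ne' l
  · exact Nat.one_lt_pow hd.ne' (Fact.out : p.Prime).one_lt
  · intro l _ g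
    exact GFAux.kernel_iff p d l g
  · intro N hN hNbot l _ m _ hlm
    obtain ⟨n₀, hn₀N, hn₀⟩ : ∃ x ∈ N, x ≠ (1 : Gp p d) := by
      rcases Subgroup.bot_or_exists_ne_one N with h | h
      · exact absurd h hNbot
      · exact h
    by_cases hr : n₀.right = 1
    · by_cases hu : GFAux.fval p d l n₀ = 0
      · right
        refine GFAux.transitive_of p d N m ?_
        refine GFAux.exists_translation' p d N hN n₀ hn₀N hr m ?_
        intro hm2
        exact hn₀ (GFAux.eq_one_of p d n₀ hr hu hm2 hlm)
      · left
        exact GFAux.transitive_of p d N l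
          (GFAux.exists_translation' p d N hN n₀ hn₀N hr l hu)
    · left
      exact GFAux.transitive_of p d N l (GFAux.exists_translation p d N hN n₀ hn₀N hr l)
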